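/- Let ν > 0, 0 < a ≤ b (playing the role of νλ₁ ≤ νλ_N), ε ∈ [0,1), and define R(r) = max_{z ∈ [a,b]} z^ε e^{−r z} for r ≥ 0. Then for every t ≥ 0, the integral ∫₀^t R(r) dr is bounded by a constant depending only on ε and a (and not on b or t); explicitly ∫₀^t R(r) dr ≤ (1 − e^{−ε})/b^{1−ε} + (ε e^{−ε}/(1−ε))(a^{ε−1} − b^{ε−1}) + e^{−ε}/a^{1−ε}. -/

import Mathlib

open Real intervalIntegral Set MeasureTheory

lemma int_exp_neg {c : ℝ} (hc : 0 < c) (s u : ℝ) :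
    ∫ r in s..u, Real.exp (-(c * r)) = (Real.exp (-(c * s)) - Real.exp (-(c * u))) / c := by
  simp_rw [neg_mul_eq_neg_mul]
  rw [intervalIntegral.integral_comp_mul_left (fun x => Real.exp x) (neg_ne_zero.mpr hc.ne'),
    integral_exp]
  have : (-c) ≠ 0 := neg_ne_zero.mpr hc.ne'
  field_simp
  simp only [smul_eq_mul]; field_simp; ring

lemma aux_key {ε c z r : ℝ} (hε : 0 ≤ ε) (hc : 0 < c) (hz : 0 < z)
    (hle : (ε / c - r) * (z - c) ≤ 0) :
    z ^ ε * Real.exp (-r * z) ≤ c ^ ε * Real.exp (-r * c) := by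
  rw [Real.rpow_def_of_pos hz, Real.rpow_def_of_pos hc, ← Real.exp_add, ← Real.exp_add,
    Real.exp_le_exp]
  have hlog : Real.log z - Real.log c ≤ z / c - 1 := by
    rw [← Real.log_div hz.ne' hc.ne']
    exact Real.log_le_sub_one_of_pos (div_pos hz hc)
  have h2 : ε * Real.log z ≤ ε * Real.log c + ε * (z / c - 1) := by nlinarith
  have h3 : (ε / c - r) * (z - c) = ε * (z / c - 1) - r * z + r * c := by
    field_simp; ring
  have h4 : ε * (z / c - 1) - r * z + r * c ≤ 0 := h3 ▸ hle
  nlinarith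

/-- For `0 < a ≤ b`, `ε ∈ [0,1)`, with `R(r) = max_{z∈[a,b]} z^ε e^{−rz}`, the
integral `∫₀^t R` is bounded by
`(1−e^{−ε})/b^{1−ε} + (ε e^{−ε}/(1−ε))(a^{ε−1} − b^{ε−1}) + e^{−ε}/a^{1−ε}`. -/
theorem stmt_4 (a b ε : ℝ) (ha : 0 < a) (hab : a ≤ b) (hε0 : 0 ≤ ε) (hε1 : ε < 1)
    (R : ℝ → ℝ)
    (hR : ∀ r : ℝ, 0 ≤ r →
      R r = sSup ((fun z : ℝ => z ^ ε * Real.exp (-r * z)) '' Set.Icc a b)) :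
    ∀ t : ℝ, 0 ≤ t →
      (∫ r in (0 : ℝ)..t, R r)
        ≤ (1 - Real.exp (-ε)) / b ^ (1 - ε)
          + (ε * Real.exp (-ε) / (1 - ε)) * (a ^ (ε - 1) - b ^ (ε - 1))
          + Real.exp (-ε) / a ^ (1 - ε) := by
  intro t ht
  have hb : 0 < b := ha.trans_le hab
  -- boundedness of the image
  have hBdd : ∀ r : ℝ, 0 ≤ r → ∀ z ∈ Set.Icc a b, z ^ ε * Real.exp (-r * z) ≤ b ^ ε := by
    intro r hr z hz
    have hz0 : 0 < z := ha.trans_le hz.1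
    have h1 : z ^ ε ≤ b ^ ε := Real.rpow_le_rpow hz0.le hz.2 hε0
    have h2 : Real.exp (-r * z) ≤ 1 := by
      rw [Real.exp_le_one_iff]; nlinarith
    have h3 : (0:ℝ) ≤ z ^ ε := Real.rpow_nonneg hz0.le ε
    nlinarith
  have hbdd' : ∀ r : ℝ, 0 ≤ r →
      BddAbove ((fun z : ℝ => z ^ ε * Real.exp (-r * z)) '' Set.Icc a b) := by
    intro r hr
    exact ⟨b ^ ε, by rintro x ⟨z, hz, rfl⟩; exact hBdd r hr z hz⟩
  -- upper bound principle
  have hub : ∀ r : ℝ, 0 ≤ r → ∀ c : ℝ, 0 ≤ c →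
      (∀ z ∈ Set.Icc a b, z ^ ε * Real.exp (-r * z) ≤ c) → R r ≤ c := by
    intro r hr c hc h
    rw [hR r hr]
    refine Real.sSup_le ?_ hc
    rintro x ⟨z, hz, rfl⟩; exact h z hz
  have hRge : ∀ r : ℝ, 0 ≤ r → ∀ z ∈ Set.Icc a b, z ^ ε * Real.exp (-r * z) ≤ R r := by
    intro r hr z hz
    rw [hR r hr]
    exact le_csSup (hbdd' r hr) ⟨z, hz, rfl⟩
  have hRnn : ∀ r : ℝ, 0 ≤ r → 0 ≤ R r := by
    intro r hr
    have h1 := hRge r hr a (Set.left_mem_Icc.mpr hab)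
    have : (0:ℝ) ≤ a ^ ε * Real.exp (-r * a) := by positivity
    linarith
  -- antitone, hence interval integrable
  have hAnti : AntitoneOn R (Set.Ici 0) := by
    intro r1 h1 r2 h2 h12
    refine hub r2 (le_trans h1 h12) (R r1) (hRnn r1 h1) ?_
    intro z hz
    have hz0 : 0 < z := ha.trans_le hz.1
    have : Real.exp (-r2 * z) ≤ Real.exp (-r1 * z) := by
      rw [Real.exp_le_exp]; nlinarith [Set.mem_Ici.mp h1]
    have h3 : (0:ℝ) ≤ z ^ ε := Real.rpow_nonneg hz0.le ε
    calc z ^ ε * Real.exp (-r2 * z) ≤ z ^ ε * Real.exp (-r1 * z) := by nlinarith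
      _ ≤ R r1 := hRge r1 h1 z hz
  have hInt : ∀ s u : ℝ, 0 ≤ s → s ≤ u → IntervalIntegrable R volume s u := by
    intro s u hs hsu
    refine AntitoneOn.intervalIntegrable (hAnti.mono ?_)
    rw [Set.uIcc_of_le hsu]
    intro x hx; exact le_trans hs hx.1
  -- region pointwise bounds
  have hP1 : ∀ r : ℝ, 0 ≤ r → r * b ≤ ε → R r ≤ b ^ ε * Real.exp (-r * b) := by
    intro r hr hrb
    refine hub r hr _ (by positivity) ?_
    intro z hz
    refine aux_key hε0 hb (ha.trans_le hz.1) ?_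
    have h1 : 0 ≤ ε / b - r := by
      rw [sub_nonneg, le_div_iff₀ hb]; linarith
    nlinarith [hz.2]
  have hP3 : ∀ r : ℝ, ε ≤ r * a → R r ≤ a ^ ε * Real.exp (-r * a) := by
    intro r hr
    have hr0 : 0 ≤ r := by nlinarith
    refine hub r hr0 _ (by positivity) ?_
    intro z hz
    refine aux_key hε0 ha (ha.trans_le hz.1) ?_
    have h1 : ε / a - r ≤ 0 := by
      rw [sub_nonpos, div_le_iff₀ ha]; linarith
    nlinarith [hz.1]
  have hP2 : 0 < ε → ∀ r : ℝ, ε / b ≤ r → R r ≤ ε ^ ε * Real.exp (-ε) * r ^ (-ε) := by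
    intro hεp r hr
    have hrp : 0 < r := lt_of_lt_of_le (div_pos hεp hb) hr
    have hc : 0 < ε / r := div_pos hεp hrp
    have hval : (ε / r) ^ ε * Real.exp (-r * (ε / r)) = ε ^ ε * Real.exp (-ε) * r ^ (-ε) := by
      rw [Real.div_rpow hε0 hrp.le, Real.rpow_neg hrp.le]
      rw [show -r * (ε / r) = -ε by field_simp]
      ring
    refine le_trans (hub r hrp.le _ (by positivity) ?_) (le_of_eq hval)
    intro z hz
    refine aux_key hε0 hc (ha.trans_le hz.1) ?_
    have he : ε / (ε / r) = r := by
      rw [div_div_eq_mul_div, mul_comm, mul_div_assoc, div_self hεp.ne', mul_one]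
    rw [he, sub_self, zero_mul]
  -- nonnegativity of the three terms
  have hexpε : Real.exp (-ε) ≤ 1 := by rw [Real.exp_le_one_iff]; linarith
  have hT1 : 0 ≤ (1 - Real.exp (-ε)) / b ^ (1 - ε) :=
    div_nonneg (by linarith) (Real.rpow_nonneg hb.le _)
  have hT2 : 0 ≤ (ε * Real.exp (-ε) / (1 - ε)) * (a ^ (ε - 1) - b ^ (ε - 1)) := by
    have h1 : b ^ (ε - 1) ≤ a ^ (ε - 1) :=
      Real.rpow_le_rpow_of_nonpos ha hab (by linarith)
    have h2 : 0 ≤ ε * Real.exp (-ε) / (1 - ε) :=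
      div_nonneg (mul_nonneg hε0 (Real.exp_pos _).le) (by linarith)
    nlinarith
  have hT3 : 0 ≤ Real.exp (-ε) / a ^ (1 - ε) := by positivity
  -- integral bound pieces
  have hI1 : ∀ s : ℝ, 0 ≤ s → s * b ≤ ε →
      (∫ r in (0:ℝ)..s, b ^ ε * Real.exp (-r * b)) ≤ (1 - Real.exp (-ε)) / b ^ (1 - ε) := by
    intro s hs hsb
    rw [intervalIntegral.integral_const_mul]
    simp_rw [show ∀ r : ℝ, -r * b = -(b * r) from fun r => by ring]
    rw [int_exp_neg hb, mul_zero, neg_zero, Real.exp_zero]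
    have h1 : Real.exp (-ε) ≤ Real.exp (-(b * s)) := by
      rw [Real.exp_le_exp]; nlinarith
    have hbε : (0:ℝ) ≤ b ^ ε := Real.rpow_nonneg hb.le ε
    have h2 : (1 - Real.exp (-ε)) / b ^ (1 - ε) = b ^ ε * ((1 - Real.exp (-ε)) / b) := by
      rw [Real.rpow_sub hb, Real.rpow_one]
      have hbε' : (0:ℝ) < b ^ ε := Real.rpow_pos_of_pos hb ε
      field_simp
    rw [h2]
    have h3 : (1 - Real.exp (-(b * s))) / b ≤ (1 - Real.exp (-ε)) / b := by
      gcongr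
    exact mul_le_mul_of_nonneg_left h3 hbε
  have hI3 : ∀ s : ℝ, ε / a ≤ s →
      (∫ r in (ε/a)..s, a ^ ε * Real.exp (-r * a)) ≤ Real.exp (-ε) / a ^ (1 - ε) := by
    intro s hs
    rw [intervalIntegral.integral_const_mul]
    simp_rw [show ∀ r : ℝ, -r * a = -(a * r) from fun r => by ring]
    rw [int_exp_neg ha]
    have he : a * (ε / a) = ε := by field_simp
    rw [he]
    have haε : (0:ℝ) ≤ a ^ ε := Real.rpow_nonneg ha.le ε
    have h2 : Real.exp (-ε) / a ^ (1 - ε) = a ^ ε * (Real.exp (-ε) / a) := by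
      rw [Real.rpow_sub ha, Real.rpow_one]
      have haε' : (0:ℝ) < a ^ ε := Real.rpow_pos_of_pos ha ε
      field_simp
    rw [h2]
    have h3 : (Real.exp (-ε) - Real.exp (-(a * s))) / a ≤ Real.exp (-ε) / a := by
      gcongr
      linarith [Real.exp_pos (-(a * s))]
    exact mul_le_mul_of_nonneg_left h3 haε
  have hI2 : 0 < ε → ∀ s : ℝ, ε / b ≤ s → s ≤ ε / a →
      (∫ r in (ε/b)..s, ε ^ ε * Real.exp (-ε) * r ^ (-ε))
        ≤ (ε * Real.exp (-ε) / (1 - ε)) * (a ^ (ε - 1) - b ^ (ε - 1)) := by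
    intro hεp s hs1 hs2
    have hεb : 0 < ε / b := div_pos hεp hb
    rw [intervalIntegral.integral_const_mul,
      integral_rpow (Or.inl (by linarith : (-1:ℝ) < -ε))]
    have hsp : 0 < s := lt_of_lt_of_le hεb hs1
    have hkey : ∀ x : ℝ, 0 < x → (ε / x) ^ (-ε + 1) = ε ^ (-ε + 1) * x ^ (ε - 1) := by
      intro x hx
      rw [Real.div_rpow hε0 hx.le, div_eq_mul_inv, ← Real.rpow_neg hx.le]
      ring_nf
    have h1 : s ^ (-ε + 1) ≤ (ε / a) ^ (-ε + 1) :=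
      Real.rpow_le_rpow hsp.le hs2 (by linarith)
    have hεε : (0:ℝ) ≤ ε ^ ε * Real.exp (-ε) := by positivity
    have h2 : ε ^ ε * Real.exp (-ε) * ((s ^ (-ε + 1) - (ε/b) ^ (-ε + 1)) / (-ε + 1))
        ≤ ε ^ ε * Real.exp (-ε) * (((ε/a) ^ (-ε + 1) - (ε/b) ^ (-ε + 1)) / (-ε + 1)) := by
      have hd : (0:ℝ) < -ε + 1 := by linarith
      gcongr
    calc _ ≤ ε ^ ε * Real.exp (-ε) * (((ε/a) ^ (-ε + 1) - (ε/b) ^ (-ε + 1)) / (-ε + 1)) := h2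
      _ = (ε * Real.exp (-ε) / (1 - ε)) * (a ^ (ε - 1) - b ^ (ε - 1)) := by
          rw [hkey a ha, hkey b hb]
          have hεmul : ε ^ ε * ε ^ (-ε + 1) = ε := by
            rw [← Real.rpow_add hεp, show ε + (-ε + 1) = 1 by ring, Real.rpow_one]
          calc ε ^ ε * Real.exp (-ε) *
                ((ε ^ (-ε+1) * a ^ (ε-1) - ε ^ (-ε+1) * b ^ (ε-1)) / (-ε + 1))
              = (ε ^ ε * ε ^ (-ε+1)) * Real.exp (-ε) *
                ((a ^ (ε-1) - b ^ (ε-1)) / (-ε+1)) := by ring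
            _ = _ := by rw [hεmul, show -ε + 1 = 1 - ε by ring]; ring
  -- assembly
  rcases eq_or_lt_of_le hε0 with hε | hεp
  · -- ε = 0
    subst hε
    have hεb0 : (0:ℝ)/a = 0 := zero_div a
    have hbound : ∀ r ∈ Set.Icc (0:ℝ) t, R r ≤ a ^ (0:ℝ) * Real.exp (-r * a) := by
      intro r hr
      exact hP3 r (by nlinarith [hr.1])
    have hcont : Continuous fun r : ℝ => a ^ (0:ℝ) * Real.exp (-r * a) := by fun_prop
    have hmono := intervalIntegral.integral_mono_on ht (hInt 0 t le_rfl ht)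
      (hcont.intervalIntegrable 0 t) hbound
    have h3 := hI3 t (by rw [hεb0]; exact ht)
    rw [hεb0] at h3
    linarith
  · -- 0 < ε
    have hεb : 0 < ε / b := div_pos hεp hb
    have hεa : 0 < ε / a := div_pos hεp ha
    have hba : ε / b ≤ ε / a := by
      apply div_le_div_of_nonneg_left hε0 ha hab
    have hcont1 : Continuous fun r : ℝ => b ^ ε * Real.exp (-r * b) := by fun_prop
    have hcont3 : Continuous fun r : ℝ => a ^ ε * Real.exp (-r * a) := by fun_prop
    have hcont2 : ∀ s : ℝ, ε / b ≤ s →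
        IntervalIntegrable (fun r : ℝ => ε ^ ε * Real.exp (-ε) * r ^ (-ε))
          volume (ε/b) s := by
      intro s hs
      apply ContinuousOn.intervalIntegrable
      apply ContinuousOn.mul continuousOn_const
      intro x hx
      rw [Set.uIcc_of_le hs] at hx
      have hx0 : x ≠ 0 := (lt_of_lt_of_le hεb hx.1).ne'
      exact (Real.continuousAt_rpow_const x (-ε) (Or.inl hx0)).continuousWithinAt
    -- piece 1 bound, valid whenever the right endpoint s satisfies s*b ≤ ε
    have piece1 : ∀ s : ℝ, 0 ≤ s → s * b ≤ ε →
        (∫ r in (0:ℝ)..s, R r) ≤ (1 - Real.exp (-ε)) / b ^ (1 - ε) := by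
      intro s hs hsb
      have hm := intervalIntegral.integral_mono_on hs (hInt 0 s le_rfl hs)
        (hcont1.intervalIntegrable 0 s)
        (fun r hr => hP1 r hr.1 (by nlinarith [hr.2]))
      exact hm.trans (hI1 s hs hsb)
    have piece2 : ∀ s : ℝ, ε / b ≤ s → s ≤ ε / a →
        (∫ r in (ε/b)..s, R r)
          ≤ (ε * Real.exp (-ε) / (1 - ε)) * (a ^ (ε - 1) - b ^ (ε - 1)) := by
      intro s hs1 hs2
      have hm := intervalIntegral.integral_mono_on hs1 (hInt (ε/b) s hεb.le hs1)
        (hcont2 s hs1) (fun r hr => hP2 hεp r hr.1)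
      exact hm.trans (hI2 hεp s hs1 hs2)
    have piece3 : ∀ s : ℝ, ε / a ≤ s →
        (∫ r in (ε/a)..s, R r) ≤ Real.exp (-ε) / a ^ (1 - ε) := by
      intro s hs
      have hm := intervalIntegral.integral_mono_on hs (hInt (ε/a) s hεa.le hs)
        (hcont3.intervalIntegrable _ _)
        (fun r hr => hP3 r (by
          have := hr.1
          rw [div_le_iff₀ ha] at this
          linarith))
      exact hm.trans (hI3 s hs)
    rcases le_total t (ε / b) with hA | hA
    · have h1 := piece1 t ht (by rw [← le_div_iff₀ hb]; exact hA)
      linarith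
    · rcases le_total t (ε / a) with hB | hB
      · have hsplit := intervalIntegral.integral_add_adjacent_intervals
          (hInt 0 (ε/b) le_rfl hεb.le) (hInt (ε/b) t hεb.le hA)
        have h1 := piece1 (ε/b) hεb.le (le_of_eq (div_mul_cancel₀ ε hb.ne'))
        have h2 := piece2 t hA hB
        linarith
      · have hsplit1 := intervalIntegral.integral_add_adjacent_intervals
          (hInt 0 (ε/b) le_rfl hεb.le) (hInt (ε/b) (ε/a) hεb.le hba)
        have hsplit2 := intervalIntegral.integral_add_adjacent_intervals
          ((hInt 0 (ε/b) le_rfl hεb.le).trans (hInt (ε/b) (ε/a) hεb.le hba))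
          (hInt (ε/a) t hεa.le hB)
        have h1 := piece1 (ε/b) hεb.le (le_of_eq (div_mul_cancel₀ ε hb.ne'))
        have h2 := piece2 (ε/a) hba le_rfl
        have h3 := piece3 t hB
        linarith
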